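/- Let d ≥ 1, 1 < p < 1 + 4/d and h > 0. Then for all m > 0 and m' > 0, E_min(m + m', h) < E_min(m, h) + E_min(m', h). -/

import Mathlib

open MeasureTheory Filter Topology
open scoped ENNReal

noncomputable section

/-- The lattice `ℤ^d`. -/
abbrev ZLat (d : ℕ) := Fin d → ℤ

/-- Mass of `v : ℤ^d → ℂ` at grid size `h`:  `M_h(v) = h^d ∑_x |v x|²`. -/
def massZ (d : ℕ) (h : ℝ) (v : ZLat d → ℂ) : ℝ :=
  h ^ d * ∑' x : ZLat d, ‖v x‖ ^ 2

/-- Gradient term `G_h(v) = (h^{d-2}/2) ∑_{x∼y} |v x - v y|²`, the sum being over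
ordered pairs of neighbours, grouped here by `x` and the `2d` neighbours `x ± eᵢ`. -/
def gradZ (d : ℕ) (h : ℝ) (v : ZLat d → ℂ) : ℝ :=
  h ^ d / h ^ 2 / 2 *
    ∑' x : ZLat d, ∑ i : Fin d,
      (‖v (x + Pi.single i 1) - v x‖ ^ 2 + ‖v (x - Pi.single i 1) - v x‖ ^ 2)

/-- Nonlinear term `N_h(v) = (h^d/(p+1)) ∑_x |v x|^{p+1}`. -/
def nonlinZ (d : ℕ) (p h : ℝ) (v : ZLat d → ℂ) : ℝ :=
  h ^ d / (p + 1) * ∑' x : ZLat d, ‖v x‖ ^ (p + 1)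

/-- Energy `H_h(v) = G_h(v) - N_h(v)`. -/
def energyZ (d : ℕ) (p h : ℝ) (v : ZLat d → ℂ) : ℝ :=
  gradZ d h v - nonlinZ d p h v

/-- `ℓ²(ℤ^d)`. -/
def ell2 (d : ℕ) : Set (ZLat d → ℂ) := {v | Summable fun x => ‖v x‖ ^ 2}

/-- `E_min(m,h) = inf {H_h(v) : v ∈ ℓ²(ℤ^d), M_h(v) = m}`. -/
def Emin (d : ℕ) (p h m : ℝ) : ℝ :=
  sInf (energyZ d p h '' {v ∈ ell2 d | massZ d h v = m})


lemma tsum_pi_prod (d : ℕ) (s : Finset ℤ) (f : Fin d → ℤ → ℝ)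
    (hf : ∀ i k, k ∉ s → f i k = 0) :
    ∑' x : ZLat d, ∏ i, f i (x i) = ∏ i, ∑ k ∈ s, f i k := by
  rw [Finset.prod_univ_sum]
  refine tsum_eq_sum fun x hx => ?_
  simp only [Fintype.mem_piFinset, not_forall] at hx
  obtain ⟨i, hi⟩ := hx
  exact Finset.prod_eq_zero (Finset.mem_univ i) (hf i _ hi)

/-- tent function of width `L` -/
def tent (L : ℕ) (k : ℤ) : ℝ := max (1 - |(k : ℝ)| / L) 0

lemma tent_nonneg (L : ℕ) (k : ℤ) : 0 ≤ tent L k := le_max_right _ _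

lemma tent_le_one (L : ℕ) (k : ℤ) : tent L k ≤ 1 := by
  unfold tent
  have h1 : 0 ≤ |(k : ℝ)| / L := by positivity
  rw [max_le_iff]
  constructor <;> [linarith; norm_num]

lemma tent_eq_zero (L : ℕ) (hL : 1 ≤ L) (k : ℤ) (hk : (L : ℤ) ≤ |k|) : tent L k = 0 := by
  unfold tent
  have hL0 : (0 : ℝ) < L := by exact_mod_cast hL
  have h1 : (L : ℝ) ≤ |(k : ℝ)| := by
    rw [← Int.cast_abs]; exact_mod_cast hk
  have h2 : (1 : ℝ) ≤ |(k : ℝ)| / L := by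
    rw [le_div_iff₀ hL0]; linarith
  rw [max_eq_right]; linarith

lemma tent_lip (L : ℕ) (hL : 1 ≤ L) (a b : ℤ) (hab : |a - b| ≤ 1) :
    |tent L a - tent L b| ≤ 1 / L := by
  unfold tent
  have hL0 : (0 : ℝ) < L := by exact_mod_cast hL
  have h1 : |tent L a - tent L b| ≤ |(1 - |(a:ℝ)| / L) - (1 - |(b:ℝ)| / L)| :=
    abs_max_sub_max_le_abs _ _ _
  have hab' : |(a : ℝ) - b| ≤ 1 := by
    rw [← Int.cast_sub, ← Int.cast_abs]; exact_mod_cast hab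
  have h2 : |(1 - |(a:ℝ)| / L) - (1 - |(b:ℝ)| / L)| = |(|(a:ℝ)| - |(b:ℝ)|)| / L := by
    rw [show (1 - |(a:ℝ)| / L) - (1 - |(b:ℝ)| / L) = (|(b:ℝ)| - |(a:ℝ)|) / L by ring,
      abs_div, abs_of_pos hL0, abs_sub_comm]
  have h3 : |(|(a:ℝ)| - |(b:ℝ)|)| ≤ 1 := le_trans (abs_abs_sub_abs_le_abs_sub _ _) hab'
  calc |tent L a - tent L b| ≤ |(1 - |(a:ℝ)| / L) - (1 - |(b:ℝ)| / L)| := h1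
    _ = |(|(a:ℝ)| - |(b:ℝ)|)| / L := h2
    _ ≤ 1 / L := by gcongr
  
lemma tent_half (L : ℕ) (hL : 1 ≤ L) (k : ℤ) (hk : (|k| : ℝ) ≤ (L : ℝ) / 2) :
    1 / 2 ≤ tent L k := by
  unfold tent
  have hL0 : (0 : ℝ) < L := by exact_mod_cast hL
  have h1 : |(k : ℝ)| / L ≤ 1 / 2 := by
    rw [div_le_iff₀ hL0]
    rw [← Int.cast_abs] at hk ⊢
    linarith
  exact le_max_of_le_left (by linarith)

lemma card_sI (L : ℕ) : ((Finset.Icc (-(L:ℤ)-1) ((L:ℤ)+1)).card : ℝ) = 2 * L + 3 := by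
  rw [Int.card_Icc]
  have h : ((L:ℤ) + 1 + 1 - (-(L:ℤ) - 1)).toNat = 2 * L + 3 := by omega
  rw [h]
  push_cast
  ring

lemma s0_card (L : ℕ) : (L : ℝ) / 2 ≤ ((Finset.Icc (0:ℤ) ((L:ℤ)/2)).card : ℝ) := by
  rw [Int.card_Icc]
  have h1 : ((L:ℤ)/2 + 1 - 0) = (L:ℤ)/2 + 1 := by ring
  rw [h1]
  have h2 : (L : ℤ) ≤ 2 * ((L:ℤ)/2 + 1) := by omega
  have h3 : (((L:ℤ)/2 + 1).toNat : ℤ) = (L:ℤ)/2 + 1 := Int.toNat_of_nonneg (by omega)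
  have h4 : (L : ℝ) ≤ 2 * ((((L:ℤ)/2 + 1).toNat : ℤ) : ℝ) := by
    rw [h3]; exact_mod_cast h2
  push_cast at h4 ⊢
  linarith

lemma s0_half (L : ℕ) (hL : 1 ≤ L) (k : ℤ) (hk : k ∈ Finset.Icc (0:ℤ) ((L:ℤ)/2)) :
    1 / 2 ≤ tent L k := by
  rw [Finset.mem_Icc] at hk
  refine tent_half L hL k ?_
  have h1 : |k| = k := abs_of_nonneg hk.1
  have h2 : 2 * k ≤ (L : ℤ) := by omega
  have h0 : (0:ℝ) ≤ (k:ℝ) := by exact_mod_cast hk.1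
  rw [abs_of_nonneg h0]
  have h4 : ((2 * k : ℤ) : ℝ) ≤ ((L : ℤ) : ℝ) := by exact_mod_cast h2
  push_cast at h4
  linarith

lemma s0_subset (L : ℕ) : Finset.Icc (0:ℤ) ((L:ℤ)/2) ⊆ Finset.Icc (-(L:ℤ)-1) ((L:ℤ)+1) :=
  Finset.Icc_subset_Icc (by omega) (by omega)

lemma A2_upper (L : ℕ) (hL : 1 ≤ L) :
    ∑ k ∈ Finset.Icc (-(L:ℤ)-1) ((L:ℤ)+1), tent L k ^ 2 ≤ 5 * L := by
  have h1 : ∑ k ∈ Finset.Icc (-(L:ℤ)-1) ((L:ℤ)+1), tent L k ^ 2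
      ≤ (Finset.Icc (-(L:ℤ)-1) ((L:ℤ)+1)).card • (1:ℝ) := by
    refine Finset.sum_le_card_nsmul _ _ _ fun k _ => ?_
    have := tent_le_one L k
    have := tent_nonneg L k
    nlinarith
  rw [nsmul_eq_mul, mul_one] at h1
  rw [card_sI] at h1
  have hL' : (1:ℝ) ≤ L := by exact_mod_cast hL
  linarith

lemma A2_lower (L : ℕ) (hL : 1 ≤ L) :
    (L : ℝ) / 8 ≤ ∑ k ∈ Finset.Icc (-(L:ℤ)-1) ((L:ℤ)+1), tent L k ^ 2 := by
  have h1 : ∑ k ∈ Finset.Icc (0:ℤ) ((L:ℤ)/2), tent L k ^ 2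
      ≤ ∑ k ∈ Finset.Icc (-(L:ℤ)-1) ((L:ℤ)+1), tent L k ^ 2 :=
    Finset.sum_le_sum_of_subset_of_nonneg (s0_subset L) fun k _ _ => by positivity
  have h2 : (Finset.Icc (0:ℤ) ((L:ℤ)/2)).card • ((1:ℝ)/4)
      ≤ ∑ k ∈ Finset.Icc (0:ℤ) ((L:ℤ)/2), tent L k ^ 2 := by
    refine Finset.card_nsmul_le_sum _ _ _ fun k hk => ?_
    have := s0_half L hL k hk
    nlinarith
  rw [nsmul_eq_mul] at h2
  have h3 := s0_card L
  nlinarith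

lemma D_bound (L : ℕ) (hL : 1 ≤ L) (e : ℤ) (he : |e| ≤ 1) :
    ∑ k ∈ Finset.Icc (-(L:ℤ)-1) ((L:ℤ)+1), (tent L (k + e) - tent L k) ^ 2 ≤ 5 / L := by
  have hL0 : (0:ℝ) < L := by exact_mod_cast hL
  have h1 : ∑ k ∈ Finset.Icc (-(L:ℤ)-1) ((L:ℤ)+1), (tent L (k + e) - tent L k) ^ 2
      ≤ (Finset.Icc (-(L:ℤ)-1) ((L:ℤ)+1)).card • ((1:ℝ)/L)^2 := by
    refine Finset.sum_le_card_nsmul _ _ _ fun k _ => ?_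
    have hlip := tent_lip L hL (k + e) k (by simpa using he)
    calc (tent L (k + e) - tent L k) ^ 2 = |tent L (k + e) - tent L k| ^ 2 := (sq_abs _).symm
      _ ≤ (1/(L:ℝ))^2 := by
          refine pow_le_pow_left₀ (abs_nonneg _) hlip 2
  rw [nsmul_eq_mul, card_sI] at h1
  have hL' : (1:ℝ) ≤ L := by exact_mod_cast hL
  have h2 : (2 * (L:ℝ) + 3) * (1/L)^2 ≤ 5 / L := by
    have h5 : (2 * (L:ℝ) + 3) ≤ 5 * L := by linarith
    calc (2 * (L:ℝ) + 3) * (1/(L:ℝ))^2 ≤ 5 * (L:ℝ) * (1/(L:ℝ))^2 :=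
          mul_le_mul_of_nonneg_right h5 (sq_nonneg _)
      _ = 5 / (L:ℝ) := by field_simp
  linarith

lemma Ap_lower (L : ℕ) (hL : 1 ≤ L) (p : ℝ) (hp : 1 < p) :
    (1/2:ℝ) ^ (p+1) * ((L:ℝ)/2) ≤ ∑ k ∈ Finset.Icc (-(L:ℤ)-1) ((L:ℤ)+1), tent L k ^ (p+1) := by
  have hb : (0:ℝ) < (1/2:ℝ) ^ (p+1) := Real.rpow_pos_of_pos (by norm_num) _
  have h1 : ∑ k ∈ Finset.Icc (0:ℤ) ((L:ℤ)/2), tent L k ^ (p+1)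
      ≤ ∑ k ∈ Finset.Icc (-(L:ℤ)-1) ((L:ℤ)+1), tent L k ^ (p+1) :=
    Finset.sum_le_sum_of_subset_of_nonneg (s0_subset L) fun k _ _ =>
      Real.rpow_nonneg (tent_nonneg L k) _
  have h2 : (Finset.Icc (0:ℤ) ((L:ℤ)/2)).card • ((1/2:ℝ)^(p+1))
      ≤ ∑ k ∈ Finset.Icc (0:ℤ) ((L:ℤ)/2), tent L k ^ (p+1) := by
    refine Finset.card_nsmul_le_sum _ _ _ fun k hk => ?_
    exact Real.rpow_le_rpow (by norm_num) (s0_half L hL k hk) (by linarith)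
  rw [nsmul_eq_mul] at h2
  have h3 := s0_card L
  calc (1/2:ℝ) ^ (p+1) * ((L:ℝ)/2) ≤ ((Finset.Icc (0:ℤ) ((L:ℤ)/2)).card : ℝ) * (1/2:ℝ)^(p+1) := by
        rw [mul_comm ((1/2:ℝ)^(p+1))]
        exact mul_le_mul_of_nonneg_right h3 hb.le
    _ ≤ ∑ k ∈ Finset.Icc (0:ℤ) ((L:ℤ)/2), tent L k ^ (p+1) := h2
    _ ≤ _ := h1

lemma tent_zero_outside (L : ℕ) (hL : 1 ≤ L) (e : ℤ) (he : |e| ≤ 1) (k : ℤ)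
    (hk : k ∉ Finset.Icc (-(L:ℤ)-1) ((L:ℤ)+1)) : tent L (k + e) = 0 := by
  rw [Finset.mem_Icc] at hk
  refine tent_eq_zero L hL _ ?_
  have he' : -1 ≤ e ∧ e ≤ 1 := abs_le.1 he
  rcases (by omega : (L:ℤ) + 2 ≤ k ∨ k ≤ -(L:ℤ) - 2) with hk' | hk'
  · rw [abs_of_nonneg (by omega)]; omega
  · rw [abs_of_nonpos (by omega)]; omega

lemma prod_add_single {d : ℕ} (f : ℤ → ℝ) (x : (Fin d → ℤ)) (i : Fin d) (e : ℤ) :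
    ∏ j, f (x j + (Pi.single i e : Fin d → ℤ) j) = f (x i + e) * ∏ j ∈ Finset.univ.erase i, f (x j) := by
  rw [← Finset.mul_prod_erase Finset.univ _ (Finset.mem_univ i), Pi.single_eq_same]
  congr 1
  refine Finset.prod_congr rfl fun j hj => ?_
  rw [Pi.single_eq_of_ne (Finset.mem_erase.1 hj).1, add_zero]

lemma prod_sub_single {d : ℕ} (f : ℤ → ℝ) (x : (Fin d → ℤ)) (i : Fin d) (e : ℤ) :
    ∏ j, f (x j - (Pi.single i e : Fin d → ℤ) j) = f (x i - e) * ∏ j ∈ Finset.univ.erase i, f (x j) := by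
  rw [← Finset.mul_prod_erase Finset.univ _ (Finset.mem_univ i), Pi.single_eq_same]
  congr 1
  refine Finset.prod_congr rfl fun j hj => ?_
  rw [Pi.single_eq_of_ne (Finset.mem_erase.1 hj).1, sub_zero]

lemma prod_ite_erase {d : ℕ} (a b : ℤ → ℝ) (x : (Fin d → ℤ)) (i : Fin d) :
    ∏ j, (if j = i then a (x j) else b (x j)) = a (x i) * ∏ j ∈ Finset.univ.erase i, b (x j) := by
  rw [← Finset.mul_prod_erase Finset.univ _ (Finset.mem_univ i), if_pos rfl]
  congr 1
  exact Finset.prod_congr rfl fun j hj => if_neg (Finset.mem_erase.1 hj).1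

lemma prod_ite_const (d : ℕ) (D A : ℝ) (i : Fin d) :
    ∏ j : Fin d, (if j = i then D else A) = D * A ^ (d - 1) := by
  rw [← Finset.mul_prod_erase Finset.univ _ (Finset.mem_univ i), if_pos rfl]
  congr 1
  rw [Finset.prod_congr rfl (fun j hj => if_neg (Finset.mem_erase.1 hj).1), Finset.prod_const,
    Finset.card_erase_of_mem (Finset.mem_univ i), Finset.card_univ, Fintype.card_fin]

lemma tent_zero_notmem (L : ℕ) (hL : 1 ≤ L) (k : ℤ)
    (hk : k ∉ Finset.Icc (-(L:ℤ)-1) ((L:ℤ)+1)) : tent L k = 0 := by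
  have := tent_zero_outside L hL 0 (by norm_num) k hk
  simpa using this

lemma gradZ_nonneg (d : ℕ) (h : ℝ) (hh : 0 < h) (v : ZLat d → ℂ) : 0 ≤ gradZ d h v := by
  unfold gradZ
  refine mul_nonneg (by positivity) (tsum_nonneg fun x => Finset.sum_nonneg fun i _ => by positivity)

lemma feas_nonempty (d : ℕ) (p h m : ℝ) (hh : 0 < h) (hm : 0 ≤ m) :
    (energyZ d p h '' {v ∈ ell2 d | massZ d h v = m}).Nonempty := by
  set c : ℝ := Real.sqrt (m / h ^ d) with hc
  refine ⟨energyZ d p h (fun x => if x = 0 then (c : ℂ) else 0), ⟨_, ⟨?_, ?_⟩, rfl⟩⟩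
  · refine summable_of_ne_finset_zero (s := {0}) fun x hx => ?_
    simp only [Finset.mem_singleton] at hx
    simp [hx]
  · have h1 : (fun x : ZLat d => ‖if x = 0 then (c : ℂ) else 0‖ ^ 2)
        = fun x : ZLat d => if x = 0 then c ^ 2 else 0 := by
      funext x
      by_cases hx : x = 0 <;> simp [hx, sq_abs]
    unfold massZ
    rw [h1, tsum_eq_single 0 (fun x hx => by simp [hx]), if_pos rfl, hc,
      Real.sq_sqrt (by positivity)]
    field_simp

lemma energy_lb (d : ℕ) (p h m : ℝ) (hp : 1 < p) (hh : 0 < h) :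
    ∀ r ∈ energyZ d p h '' {v ∈ ell2 d | massZ d h v = m},
      -(h ^ d / (p + 1) * (m / h ^ d) ^ ((p + 1) / 2)) ≤ r := by
  rintro r ⟨v, ⟨hv2, hvm⟩, rfl⟩
  have hv2' : Summable fun x : ZLat d => ‖v x‖ ^ 2 := hv2
  set S : ℝ := ∑' x : ZLat d, ‖v x‖ ^ 2 with hS
  have hS0 : 0 ≤ S := tsum_nonneg fun x => by positivity
  have hSm : S = m / h ^ d := by
    have hvm' : h ^ d * S = m := hvm
    field_simp [← hvm']
    linear_combination hvm'
  -- pointwise bound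
  have key : ∀ x : ZLat d, ‖v x‖ ^ (p + 1) ≤ S ^ ((p - 1) / 2) * ‖v x‖ ^ 2 := by
    intro x
    set a : ℝ := ‖v x‖ with ha
    have ha0 : 0 ≤ a := norm_nonneg _
    have haS : a ^ 2 ≤ S := Summable.le_tsum hv2' x fun j _ => by positivity
    rcases eq_or_lt_of_le ha0 with h0 | h0
    · rw [← h0, Real.zero_rpow (by linarith)]
      positivity
    · have h1 : a ^ (p + 1) = a ^ (2 : ℝ) * a ^ (p - 1) := by
        rw [← Real.rpow_add h0]; ring_nf
      have h2 : a ^ (p - 1) ≤ S ^ ((p - 1) / 2) := by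
        have haSq : a ≤ Real.sqrt S := (Real.le_sqrt ha0 hS0).2 haS
        calc a ^ (p - 1) ≤ (Real.sqrt S) ^ (p - 1) :=
              Real.rpow_le_rpow ha0 haSq (by linarith)
          _ = S ^ ((p - 1) / 2) := by
              rw [Real.sqrt_eq_rpow, ← Real.rpow_mul hS0]; ring_nf
      calc a ^ (p + 1) = a ^ (2 : ℝ) * a ^ (p - 1) := h1
        _ ≤ a ^ (2 : ℝ) * S ^ ((p - 1) / 2) := by
            refine mul_le_mul_of_nonneg_left h2 (by positivity)
        _ = S ^ ((p - 1) / 2) * a ^ 2 := by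
            rw [Real.rpow_two]; ring
  have hsum : Summable fun x : ZLat d => S ^ ((p - 1) / 2) * ‖v x‖ ^ 2 := hv2'.mul_left _
  have hNsum : (∑' x : ZLat d, ‖v x‖ ^ (p + 1)) ≤ S ^ ((p - 1) / 2) * S := by
    rw [hS, ← tsum_mul_left]
    exact Summable.tsum_le_tsum key (Summable.of_nonneg_of_le (fun x => by positivity) key hsum) hsum
  have hSq : S ^ ((p - 1) / 2) * S = S ^ ((p + 1) / 2) := by
    rcases eq_or_lt_of_le hS0 with h0 | h0
    · rw [← h0, Real.zero_rpow (by linarith), Real.zero_rpow (by linarith)]; ring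
    · nth_rewrite 2 [← Real.rpow_one S]
      rw [← Real.rpow_add h0]; ring_nf
  have hN : nonlinZ d p h v ≤ h ^ d / (p + 1) * (m / h ^ d) ^ ((p + 1) / 2) := by
    unfold nonlinZ
    rw [← hSm]
    refine mul_le_mul_of_nonneg_left ?_ (by positivity)
    rw [← hSq]; exact hNsum
  have hG := gradZ_nonneg d h hh v
  unfold energyZ
  linarith

lemma feas_bdd (d : ℕ) (p h m : ℝ) (hp : 1 < p) (hh : 0 < h) :
    BddBelow (energyZ d p h '' {v ∈ ell2 d | massZ d h v = m}) :=
  ⟨_, energy_lb d p h m hp hh⟩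

lemma Emin_scale (d : ℕ) (p h m θ : ℝ) (hp : 1 < p) (hh : 0 < h) (hm : 0 < m) (hθ : 1 ≤ θ) :
    Emin d p h (θ * m) ≤ θ ^ ((p + 1) / 2) * Emin d p h m := by
  have hθ0 : (0 : ℝ) < θ := lt_of_lt_of_le one_pos hθ
  have hq1 : (1 : ℝ) ≤ (p + 1) / 2 := by linarith
  have hθq0 : (0 : ℝ) < θ ^ ((p + 1) / 2) := Real.rpow_pos_of_pos hθ0 _
  have hθq : θ ≤ θ ^ ((p + 1) / 2) := by
    calc θ = θ ^ (1 : ℝ) := (Real.rpow_one θ).symm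
      _ ≤ θ ^ ((p + 1) / 2) := Real.rpow_le_rpow_of_exponent_le hθ hq1
  set rt : ℝ := Real.sqrt θ with hrt
  have hrt0 : 0 ≤ rt := Real.sqrt_nonneg θ
  have hrt2 : rt ^ 2 = θ := Real.sq_sqrt hθ0.le
  have key : ∀ r ∈ energyZ d p h '' {v ∈ ell2 d | massZ d h v = m},
      Emin d p h (θ * m) ≤ θ ^ ((p + 1) / 2) * r := by
    rintro r ⟨v, ⟨hv2, hvm⟩, rfl⟩
    have hv2' : Summable fun x : ZLat d => ‖v x‖ ^ 2 := hv2
    set w : ZLat d → ℂ := fun x => (rt : ℂ) * v x with hw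
    have hwn : ∀ x, ‖w x‖ = rt * ‖v x‖ := by
      intro x
      rw [hw]
      rw [norm_mul, Complex.norm_real, Real.norm_eq_abs, abs_of_nonneg hrt0]
    have hwsq : (fun x : ZLat d => ‖w x‖ ^ 2) = fun x => θ * ‖v x‖ ^ 2 := by
      funext x; rw [hwn, mul_pow, hrt2]
    have hw2 : Summable fun x : ZLat d => ‖w x‖ ^ 2 := by
      rw [hwsq]; exact hv2'.mul_left θ
    have hwm : massZ d h w = θ * m := by
      unfold massZ at hvm ⊢
      rw [hwsq, tsum_mul_left]
      rw [← hvm]; ring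
    have hwg : gradZ d h w = θ * gradZ d h v := by
      unfold gradZ
      have hptw : (fun x : ZLat d => ∑ i : Fin d,
          (‖w (x + Pi.single i 1) - w x‖ ^ 2 + ‖w (x - Pi.single i 1) - w x‖ ^ 2))
          = fun x => θ * ∑ i : Fin d,
          (‖v (x + Pi.single i 1) - v x‖ ^ 2 + ‖v (x - Pi.single i 1) - v x‖ ^ 2) := by
        funext x
        rw [Finset.mul_sum]
        refine Finset.sum_congr rfl fun i _ => ?_
        have e1 : ∀ y z : ZLat d, ‖w y - w z‖ ^ 2 = θ * ‖v y - v z‖ ^ 2 := by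
          intro y z
          rw [hw]
          simp only []
          rw [← mul_sub, norm_mul, Complex.norm_real, Real.norm_eq_abs,
            abs_of_nonneg hrt0, mul_pow, hrt2]
        rw [e1, e1]; ring
      rw [hptw, tsum_mul_left]; ring
    have hwnl : nonlinZ d p h w = θ ^ ((p + 1) / 2) * nonlinZ d p h v := by
      unfold nonlinZ
      have hptw : (fun x : ZLat d => ‖w x‖ ^ (p + 1))
          = fun x => θ ^ ((p + 1) / 2) * ‖v x‖ ^ (p + 1) := by
        funext x
        rw [hwn, Real.mul_rpow hrt0 (norm_nonneg _)]
        congr 1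
        rw [hrt, Real.sqrt_eq_rpow, ← Real.rpow_mul hθ0.le]
        ring_nf
      rw [hptw, tsum_mul_left]; ring
    have hintermediate : energyZ d p h w ≤ θ ^ ((p + 1) / 2) * energyZ d p h v := by
      unfold energyZ
      rw [hwg, hwnl]
      have hG := gradZ_nonneg d h hh v
      nlinarith [mul_le_mul_of_nonneg_right hθq hG]
    calc Emin d p h (θ * m) ≤ energyZ d p h w :=
          csInf_le (feas_bdd d p h (θ * m) hp hh) ⟨w, ⟨hw2, hwm⟩, rfl⟩
      _ ≤ θ ^ ((p + 1) / 2) * energyZ d p h v := hintermediate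
  have h1 : Emin d p h (θ * m) / θ ^ ((p + 1) / 2) ≤ Emin d p h m := by
    refine le_csInf (feas_nonempty d p h m hh hm.le) fun r hr => ?_
    rw [div_le_iff₀ hθq0, mul_comm r]
    exact key r hr
  calc Emin d p h (θ * m)
      = Emin d p h (θ * m) / θ ^ ((p + 1) / 2) * θ ^ ((p + 1) / 2) := by
        field_simp
    _ ≤ Emin d p h m * θ ^ ((p + 1) / 2) := by
        exact mul_le_mul_of_nonneg_right h1 hθq0.le
    _ = θ ^ ((p + 1) / 2) * Emin d p h m := by ring

lemma sum_ite_irrel' (s : Finset ℤ) (c : Prop) [Decidable c] (f g : ℤ → ℝ) :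
    ∑ k ∈ s, (if c then f k else g k) = if c then ∑ k ∈ s, f k else ∑ k ∈ s, g k := by
  split <;> rfl

lemma Emin_neg (d : ℕ) (hd : 1 ≤ d) (p h : ℝ) (hp : 1 < p)
    (hp' : p < 1 + 4 / (d : ℝ)) (hh : 0 < h) (m : ℝ) (hm : 0 < m) :
    Emin d p h m < 0 := by
  classical
  have hd0 : (0:ℝ) < d := by exact_mod_cast hd
  -- exponent gap
  set ε : ℝ := 2 - (d : ℝ) * (p - 1) / 2 with hεdef
  have hε0 : 0 < ε := by
    have h1 : p - 1 < 4 / d := by linarith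
    have h2 : (p - 1) * (d:ℝ) < 4 := (lt_div_iff₀ hd0).1 h1
    have h2' : (d:ℝ) * (p - 1) < 4 := by rw [mul_comm]; exact h2
    simp only [hεdef]; linarith
  -- constants
  set β : ℝ := (1/2:ℝ) ^ (p+1) / 2 with hβdef
  have hβ0 : 0 < β := by
    have : (0:ℝ) < (1/2:ℝ) ^ (p+1) := Real.rpow_pos_of_pos (by norm_num) _
    simp only [hβdef]; positivity
  set γ : ℝ := (m / (h ^ d * 5 ^ d)) ^ ((p-1)/2) with hγdef
  have hγ0 : 0 < γ := Real.rpow_pos_of_pos (by positivity) _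
  set K₁ : ℝ := h ^ d / h ^ 2 / 2 * d * 10 * 5 ^ (d - 1) with hK₁def
  set K₂ : ℝ := h ^ d / (p + 1) * γ * β ^ d with hK₂def
  have hK₂0 : 0 < K₂ := by
    have h1 : (0:ℝ) < h ^ d / (p + 1) := by positivity
    simp only [hK₂def]; positivity
  -- choose L
  obtain ⟨L, hLL⟩ : ∃ L : ℕ, 1 ≤ L ∧ K₁ / K₂ < (L:ℝ) ^ ε := by
    have t : Filter.Tendsto (fun n : ℕ => ((n:ℝ)) ^ ε) Filter.atTop Filter.atTop :=
      (tendsto_rpow_atTop hε0).comp tendsto_natCast_atTop_atTop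
    have := (Filter.eventually_ge_atTop 1).and (t.eventually_gt_atTop (K₁ / K₂))
    exact this.exists
  obtain ⟨hL1, hLC⟩ := hLL
  have hLR0 : (0:ℝ) < (L:ℝ) := by exact_mod_cast hL1
  have hLR1 : (1:ℝ) ≤ (L:ℝ) := by exact_mod_cast hL1
  set s : Finset ℤ := Finset.Icc (-(L:ℤ)-1) ((L:ℤ)+1) with hsdef
  set A2 : ℝ := ∑ k ∈ s, tent L k ^ 2 with hA2def
  set Ap : ℝ := ∑ k ∈ s, tent L k ^ (p+1) with hApdef
  set Dp : ℝ := ∑ k ∈ s, (tent L (k+1) - tent L k) ^ 2 with hDpdef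
  set Dm : ℝ := ∑ k ∈ s, (tent L (k-1) - tent L k) ^ 2 with hDmdef
  have hA2lo : (L:ℝ)/8 ≤ A2 := A2_lower L hL1
  have hA2hi : A2 ≤ 5 * L := A2_upper L hL1
  have hA20 : 0 < A2 := lt_of_lt_of_le (by positivity) hA2lo
  have hDp : Dp ≤ 5 / L := by
    have := D_bound L hL1 1 (by norm_num)
    simpa using this
  have hDm : Dm ≤ 5 / L := by
    have h0 := D_bound L hL1 (-1) (by norm_num)
    have he : ∀ k : ℤ, k + (-1) = k - 1 := fun k => by ring
    calc Dm = ∑ k ∈ s, (tent L (k + (-1)) - tent L k) ^ 2 :=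
          Finset.sum_congr rfl fun k _ => by rw [he]
      _ ≤ 5 / L := h0
  have hAplo : β * L ≤ Ap := by
    have := Ap_lower L hL1 p hp
    simp only [hβdef]
    calc (1/2:ℝ)^(p+1)/2 * L = (1/2:ℝ)^(p+1) * ((L:ℝ)/2) := by ring
      _ ≤ Ap := this
  -- the trial function
  set c : ℝ := Real.sqrt (m / (h ^ d * A2 ^ d)) with hcdef
  have hc0 : 0 < c := Real.sqrt_pos.2 (by positivity)
  have hc2 : c ^ 2 = m / (h ^ d * A2 ^ d) := Real.sq_sqrt (by positivity)
  set v : ZLat d → ℂ := fun x => ((c * ∏ i, tent L (x i) : ℝ) : ℂ) with hvdef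
  have hprodnn : ∀ x : ZLat d, 0 ≤ ∏ i, tent L (x i) :=
    fun x => Finset.prod_nonneg fun i _ => tent_nonneg L _
  have hvn : ∀ x, ‖v x‖ = c * ∏ i, tent L (x i) := by
    intro x
    rw [hvdef]
    simp only []
    rw [Complex.norm_real, Real.norm_eq_abs, abs_of_nonneg (mul_nonneg hc0.le (hprodnn x))]
  have hout : ∀ x : ZLat d, x ∉ Fintype.piFinset (fun _ : Fin d => s) →
      (∏ i, tent L (x i)) = 0 := by
    intro x hx
    simp only [Fintype.mem_piFinset, not_forall] at hx
    obtain ⟨i, hi⟩ := hx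
    exact Finset.prod_eq_zero (Finset.mem_univ i) (tent_zero_notmem L hL1 _ hi)
  -- mass
  have hmass : massZ d h v = m := by
    unfold massZ
    have e1 : (fun x : ZLat d => ‖v x‖ ^ 2) = fun x => c^2 * ∏ i, (tent L (x i))^2 := by
      funext x
      rw [hvn, mul_pow, ← Finset.prod_pow]
    rw [e1, tsum_mul_left, tsum_pi_prod d s (fun _ k => tent L k ^ 2)
      (fun i k hk => by show tent L k ^ 2 = 0; rw [tent_zero_notmem L hL1 k hk]; ring),
      Finset.prod_const, Finset.card_univ, Fintype.card_fin, ← hA2def, hc2]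
    field_simp
  have hell2 : v ∈ ell2 d := by
    refine summable_of_ne_finset_zero (s := Fintype.piFinset (fun _ : Fin d => s))
      fun x hx => ?_
    rw [hvn, hout x hx]
    ring
  -- nonlinear term
  have hnonlin : nonlinZ d p h v = h ^ d / (p + 1) * (c ^ (p+1) * Ap ^ d) := by
    unfold nonlinZ
    have e1 : (fun x : ZLat d => ‖v x‖ ^ (p+1))
        = fun x => c^(p+1) * ∏ i, (tent L (x i))^(p+1) := by
      funext x
      rw [hvn, Real.mul_rpow hc0.le (hprodnn x),
        ← Real.finset_prod_rpow _ _ (fun i _ => tent_nonneg L _)]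
    have hfz : ∀ (i : Fin d) (k : ℤ), k ∉ s → (fun (_ : Fin d) (k : ℤ) => tent L k ^ (p+1)) i k = 0 := by
      intro i k hk
      show tent L k ^ (p+1) = 0
      rw [tent_zero_notmem L hL1 k hk, Real.zero_rpow (by linarith)]
    rw [e1, tsum_mul_left, tsum_pi_prod d s (fun _ k => tent L k ^ (p+1)) hfz,
      Finset.prod_const, Finset.card_univ, Fintype.card_fin, ← hApdef]
  -- gradient term
  set Gp : Fin d → Fin d → ℤ → ℝ :=
    fun i j k => if j = i then (tent L (k+1) - tent L k)^2 else tent L k ^ 2 with hGpdef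
  set Gm : Fin d → Fin d → ℤ → ℝ :=
    fun i j k => if j = i then (tent L (k-1) - tent L k)^2 else tent L k ^ 2 with hGmdef
  have keyp : ∀ (x : ZLat d) (i : Fin d),
      ‖v (x + Pi.single i 1) - v x‖ ^ 2 = c^2 * ∏ j, Gp i j (x j) := by
    intro x i
    have e1 : v (x + Pi.single i 1)
        = ((c * (tent L (x i + 1) * ∏ j ∈ Finset.univ.erase i, tent L (x j)) : ℝ) : ℂ) := by
      rw [hvdef]
      simp only [Pi.add_apply]
      rw [prod_add_single (tent L) x i 1]
    have e2 : v x = ((c * (tent L (x i) * ∏ j ∈ Finset.univ.erase i, tent L (x j)) : ℝ) : ℂ) := by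
      rw [hvdef]
      simp only []
      rw [← Finset.mul_prod_erase Finset.univ _ (Finset.mem_univ i)]
    have e3 : ∏ j, Gp i j (x j)
        = (tent L (x i + 1) - tent L (x i))^2
          * (∏ j ∈ Finset.univ.erase i, tent L (x j))^2 := by
      rw [hGpdef]
      rw [prod_ite_erase (fun k => (tent L (k+1) - tent L k)^2) (fun k => tent L k ^ 2) x i,
        ← Finset.prod_pow]
    rw [e1, e2, ← Complex.ofReal_sub, Complex.norm_real, Real.norm_eq_abs, sq_abs, e3]
    ring
  have keym : ∀ (x : ZLat d) (i : Fin d),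
      ‖v (x - Pi.single i 1) - v x‖ ^ 2 = c^2 * ∏ j, Gm i j (x j) := by
    intro x i
    have e1 : v (x - Pi.single i 1)
        = ((c * (tent L (x i - 1) * ∏ j ∈ Finset.univ.erase i, tent L (x j)) : ℝ) : ℂ) := by
      rw [hvdef]
      simp only [Pi.sub_apply]
      rw [prod_sub_single (tent L) x i 1]
    have e2 : v x = ((c * (tent L (x i) * ∏ j ∈ Finset.univ.erase i, tent L (x j)) : ℝ) : ℂ) := by
      rw [hvdef]
      simp only []
      rw [← Finset.mul_prod_erase Finset.univ _ (Finset.mem_univ i)]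
    have e3 : ∏ j, Gm i j (x j)
        = (tent L (x i - 1) - tent L (x i))^2
          * (∏ j ∈ Finset.univ.erase i, tent L (x j))^2 := by
      rw [hGmdef]
      rw [prod_ite_erase (fun k => (tent L (k-1) - tent L k)^2) (fun k => tent L k ^ 2) x i,
        ← Finset.prod_pow]
    rw [e1, e2, ← Complex.ofReal_sub, Complex.norm_real, Real.norm_eq_abs, sq_abs, e3]
    ring
  have hGpz : ∀ (i j : Fin d) (k : ℤ), k ∉ s → Gp i j k = 0 := by
    intro i j k hk
    rw [hGpdef]
    simp only []
    have h1 : tent L k = 0 := tent_zero_notmem L hL1 k hk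
    have h2 : tent L (k+1) = 0 := tent_zero_outside L hL1 1 (by norm_num) k hk
    split <;> simp [h1, h2]
  have hGmz : ∀ (i j : Fin d) (k : ℤ), k ∉ s → Gm i j k = 0 := by
    intro i j k hk
    rw [hGmdef]
    simp only []
    have h1 : tent L k = 0 := tent_zero_notmem L hL1 k hk
    have h2 : tent L (k-1) = 0 := by
      have := tent_zero_outside L hL1 (-1) (by norm_num) k hk
      rw [show k + (-1) = k - 1 by ring] at this
      exact this
    split <;> simp [h1, h2]
  have hGpsum : ∀ i : Fin d, ∑' x : ZLat d, ∏ j, Gp i j (x j) = Dp * A2 ^ (d-1) := by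
    intro i
    rw [tsum_pi_prod d s (Gp i) (fun j k hk => hGpz i j k hk)]
    have e1 : ∀ j : Fin d, ∑ k ∈ s, Gp i j k = if j = i then Dp else A2 := by
      intro j
      simp only [hGpdef]
      rw [sum_ite_irrel']
    rw [Finset.prod_congr rfl (fun j _ => e1 j), prod_ite_const d Dp A2 i]
  have hGmsum : ∀ i : Fin d, ∑' x : ZLat d, ∏ j, Gm i j (x j) = Dm * A2 ^ (d-1) := by
    intro i
    rw [tsum_pi_prod d s (Gm i) (fun j k hk => hGmz i j k hk)]
    have e1 : ∀ j : Fin d, ∑ k ∈ s, Gm i j k = if j = i then Dm else A2 := by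
      intro j
      simp only [hGmdef]
      rw [sum_ite_irrel']
    rw [Finset.prod_congr rfl (fun j _ => e1 j), prod_ite_const d Dm A2 i]
  have hgrad : gradZ d h v
      = h ^ d / h ^ 2 / 2 * ((d:ℝ) * (c^2 * ((Dp + Dm) * A2 ^ (d-1)))) := by
    unfold gradZ
    congr 1
    have e0 : (fun x : ZLat d => ∑ i : Fin d,
        (‖v (x + Pi.single i 1) - v x‖ ^ 2 + ‖v (x - Pi.single i 1) - v x‖ ^ 2))
        = fun x => ∑ i : Fin d, (c^2 * ∏ j, Gp i j (x j) + c^2 * ∏ j, Gm i j (x j)) := by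
      funext x
      exact Finset.sum_congr rfl fun i _ => by rw [keyp x i, keym x i]
    rw [e0]
    have hsump : ∀ i : Fin d, Summable (fun x : ZLat d => c^2 * ∏ j, Gp i j (x j)) := by
      intro i
      refine summable_of_ne_finset_zero (s := Fintype.piFinset (fun _ : Fin d => s))
        fun x hx => ?_
      simp only [Fintype.mem_piFinset, not_forall] at hx
      obtain ⟨j, hj⟩ := hx
      rw [Finset.prod_eq_zero (Finset.mem_univ j) (hGpz i j _ hj)]; ring
    have hsumm : ∀ i : Fin d, Summable (fun x : ZLat d => c^2 * ∏ j, Gm i j (x j)) := by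
      intro i
      refine summable_of_ne_finset_zero (s := Fintype.piFinset (fun _ : Fin d => s))
        fun x hx => ?_
      simp only [Fintype.mem_piFinset, not_forall] at hx
      obtain ⟨j, hj⟩ := hx
      rw [Finset.prod_eq_zero (Finset.mem_univ j) (hGmz i j _ hj)]; ring
    rw [Summable.tsum_finsetSum (fun i _ => ((hsump i).add (hsumm i)))]
    have e2 : ∀ i : Fin d,
        ∑' x : ZLat d, (c^2 * ∏ j, Gp i j (x j) + c^2 * ∏ j, Gm i j (x j))
        = c^2 * ((Dp + Dm) * A2 ^ (d-1)) := by
      intro i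
      rw [Summable.tsum_add (hsump i) (hsumm i), tsum_mul_left, tsum_mul_left, hGpsum i, hGmsum i]
      ring
    rw [Finset.sum_congr rfl (fun i _ => e2 i), Finset.sum_const, Finset.card_univ,
      Fintype.card_fin, nsmul_eq_mul]
  -- numeric comparison
  have hcomp : gradZ d h v < nonlinZ d p h v := by
    have hW0 : (0:ℝ) < (L:ℝ) ^ ((d:ℝ) - 2) := Real.rpow_pos_of_pos hLR0 _
    have hc2pos : (0:ℝ) < c^2 := pow_pos hc0 2
    have hcoefg : (0:ℝ) ≤ h^d/h^2/2 :=
      div_nonneg (div_nonneg (pow_nonneg hh.le d) (sq_nonneg h)) (by norm_num)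
    have hcoefn : (0:ℝ) ≤ h^d/(p+1) := div_nonneg (pow_nonneg hh.le d) (by linarith)
    have h10 : (10:ℝ)/(L:ℝ) = 5/(L:ℝ) + 5/(L:ℝ) := by ring
    have hA2pow : A2 ^ (d-1) ≤ (5*(L:ℝ)) ^ (d-1) := pow_le_pow_left₀ hA20.le hA2hi _
    have hgrad_le : gradZ d h v
        ≤ h^d/h^2/2 * ((d:ℝ) * (c^2 * ((10/(L:ℝ)) * (5*(L:ℝ))^(d-1)))) := by
      rw [hgrad]
      refine mul_le_mul_of_nonneg_left ?_ hcoefg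
      refine mul_le_mul_of_nonneg_left ?_ hd0.le
      refine mul_le_mul_of_nonneg_left ?_ hc2pos.le
      refine mul_le_mul (by rw [h10]; exact add_le_add hDp hDm) hA2pow
        (pow_nonneg hA20.le _) (by positivity)
    have hcp : c ^ (p+1) = c^2 * c^(p-1) := by
      rw [show p + 1 = 2 + (p - 1) by ring, Real.rpow_add hc0,
        show (2:ℝ) = ((2:ℕ):ℝ) by norm_num, Real.rpow_natCast]
    have hc2lo : (m / (h^d * 5^d)) / (L:ℝ)^d ≤ c^2 := by
      rw [hc2, div_div]
      refine div_le_div_of_nonneg_left hm.le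
        (mul_pos (pow_pos hh d) (pow_pos hA20 d)) ?_
      calc h^d * A2^d ≤ h^d * (5*(L:ℝ))^d :=
            mul_le_mul_of_nonneg_left (pow_le_pow_left₀ hA20.le hA2hi d)
              (pow_pos hh d).le
        _ = h^d * 5^d * (L:ℝ)^d := by rw [mul_pow]; ring
    have hcp1 : γ / (L:ℝ)^((d:ℝ)*(p-1)/2) ≤ c^(p-1) := by
      have e0 : c^(p-1) = (c^2)^((p-1)/2) := by
        rw [← Real.rpow_natCast c 2, ← Real.rpow_mul hc0.le]
        congr 1
        push_cast
        ring
      rw [e0]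
      have hnum : (0:ℝ) ≤ (m / (h^d * 5^d)) :=
        div_nonneg hm.le (mul_nonneg (pow_nonneg hh.le d) (by positivity))
      have h1 : ((m / (h^d * 5^d)) / (L:ℝ)^d)^((p-1)/2) ≤ (c^2)^((p-1)/2) :=
        Real.rpow_le_rpow (div_nonneg hnum (pow_nonneg hLR0.le d)) hc2lo (by linarith)
      refine le_trans (le_of_eq ?_) h1
      rw [Real.div_rpow hnum (pow_nonneg hLR0.le d), hγdef]
      congr 1
      rw [← Real.rpow_natCast (L:ℝ) d, ← Real.rpow_mul hLR0.le]
      congr 1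
      ring
    have hnl_ge : h^d/(p+1) * ((c^2 * (γ / (L:ℝ)^((d:ℝ)*(p-1)/2))) * (β^d * (L:ℝ)^d))
        ≤ nonlinZ d p h v := by
      rw [hnonlin, hcp]
      refine mul_le_mul_of_nonneg_left ?_ hcoefn
      have h2 : β^d * (L:ℝ)^d ≤ Ap^d := by
        rw [← mul_pow]
        exact pow_le_pow_left₀ (mul_nonneg hβ0.le hLR0.le) hAplo d
      refine mul_le_mul (mul_le_mul_of_nonneg_left hcp1 hc2pos.le) h2
        (mul_nonneg (pow_nonneg hβ0.le d) (pow_nonneg hLR0.le d)) ?_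
      exact mul_nonneg hc2pos.le (Real.rpow_nonneg hc0.le _)
    have eL : (10/(L:ℝ)) * (5*(L:ℝ))^(d-1) = 10 * 5^(d-1) * (L:ℝ)^((d:ℝ)-2) := by
      have e1 : ((L:ℝ))^(d-1 : ℕ) = (L:ℝ)^(((d:ℝ)) - 1) := by
        rw [← Real.rpow_natCast (L:ℝ) (d-1)]
        congr 1
        rw [Nat.cast_sub hd]
        norm_num
      have e2 : (L:ℝ)^(((d:ℝ)) - 1) / (L:ℝ) = (L:ℝ)^((d:ℝ)-2) := by
        rw [show ((d:ℝ)-1) = ((d:ℝ)-2)+1 by ring, Real.rpow_add hLR0, Real.rpow_one,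
          mul_div_assoc, div_self (ne_of_gt hLR0), mul_one]
      calc (10/(L:ℝ)) * (5*(L:ℝ))^(d-1)
          = 10 * 5^(d-1) * ((L:ℝ)^((d:ℝ)-1) / L) := by rw [mul_pow, e1]; ring
        _ = 10 * 5^(d-1) * (L:ℝ)^((d:ℝ)-2) := by rw [e2]
    have eR : (γ / (L:ℝ)^((d:ℝ)*(p-1)/2)) * (β^d * (L:ℝ)^d)
        = γ * β^d * ((L:ℝ)^((d:ℝ)-2) * (L:ℝ)^ε) := by
      have e3 : (L:ℝ)^((d:ℝ)) / (L:ℝ)^((d:ℝ)*(p-1)/2) = (L:ℝ)^((d:ℝ)-2) * (L:ℝ)^ε := by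
        rw [← Real.rpow_sub hLR0, ← Real.rpow_add hLR0]
        congr 1
        simp only [hεdef]
        ring
      calc (γ / (L:ℝ)^((d:ℝ)*(p-1)/2)) * (β^d * (L:ℝ)^d)
          = γ * β^d * ((L:ℝ)^((d:ℝ)) / (L:ℝ)^((d:ℝ)*(p-1)/2)) := by
            rw [← Real.rpow_natCast (L:ℝ) d]
            ring
        _ = γ * β^d * ((L:ℝ)^((d:ℝ)-2) * (L:ℝ)^ε) := by rw [e3]
    have hK : K₁ < K₂ * (L:ℝ)^ε := by
      have := (div_lt_iff₀ hK₂0).1 hLC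
      linarith [this]
    have hcore : h^d/h^2/2 * ((d:ℝ) * (c^2 * ((10/(L:ℝ)) * (5*(L:ℝ))^(d-1))))
        < h^d/(p+1) * ((c^2 * (γ / (L:ℝ)^((d:ℝ)*(p-1)/2))) * (β^d * (L:ℝ)^d)) := by
      have eL' : h^d/h^2/2 * ((d:ℝ) * (c^2 * ((10/(L:ℝ)) * (5*(L:ℝ))^(d-1))))
          = c^2 * (K₁ * (L:ℝ)^((d:ℝ)-2)) := by
        rw [eL, hK₁def]; ring
      have eR' : h^d/(p+1) * ((c^2 * (γ / (L:ℝ)^((d:ℝ)*(p-1)/2))) * (β^d * (L:ℝ)^d))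
          = c^2 * (K₂ * ((L:ℝ)^((d:ℝ)-2) * (L:ℝ)^ε)) := by
        rw [show (c^2 * (γ / (L:ℝ)^((d:ℝ)*(p-1)/2))) * (β^d * (L:ℝ)^d)
            = c^2 * ((γ / (L:ℝ)^((d:ℝ)*(p-1)/2)) * (β^d * (L:ℝ)^d)) by ring, eR, hK₂def]
        ring
      rw [eL', eR']
      refine mul_lt_mul_of_pos_left ?_ hc2pos
      calc K₁ * (L:ℝ)^((d:ℝ)-2) < (K₂ * (L:ℝ)^ε) * (L:ℝ)^((d:ℝ)-2) :=
            mul_lt_mul_of_pos_right hK hW0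
        _ = K₂ * ((L:ℝ)^((d:ℝ)-2) * (L:ℝ)^ε) := by ring
    linarith [hgrad_le, hnl_ge, hcore]
  have henergy : energyZ d p h v < 0 := by
    unfold energyZ; linarith
  calc Emin d p h m ≤ energyZ d p h v :=
        csInf_le (feas_bdd d p h m hp hh) ⟨v, ⟨hell2, hmass⟩, rfl⟩
    _ < 0 := henergy
/-- strict subadditivity of `E_min` in the mass-subcritical regime. -/
theorem strict_subadditivity_Emin (d : ℕ) (hd : 1 ≤ d) (p h : ℝ) (hp : 1 < p)
    (hp' : p < 1 + 4 / (d : ℝ)) (hh : 0 < h) (m m' : ℝ) (hm : 0 < m) (hm' : 0 < m') :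
    Emin d p h (m + m') < Emin d p h m + Emin d p h m' := by
  have hq1 : (1:ℝ) < (p+1)/2 := by linarith
  have hM : 0 < m + m' := by linarith
  have negm := Emin_neg d hd p h hp hp' hh m hm
  have negm' := Emin_neg d hd p h hp hp' hh m' hm'
  have hθgt : 1 < (m+m')/m := by rw [lt_div_iff₀ hm]; linarith
  have hθ'gt : 1 < (m+m')/m' := by rw [lt_div_iff₀ hm']; linarith
  have s1 : Emin d p h (m+m') ≤ ((m+m')/m)^((p+1)/2) * Emin d p h m := by
    have h0 := Emin_scale d p h m ((m+m')/m) hp hh hm hθgt.le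
    rwa [div_mul_cancel₀ _ hm.ne'] at h0
  have s2 : Emin d p h (m+m') ≤ ((m+m')/m')^((p+1)/2) * Emin d p h m' := by
    have h0 := Emin_scale d p h m' ((m+m')/m') hp hh hm' hθ'gt.le
    rwa [div_mul_cancel₀ _ hm'.ne'] at h0
  have t1 : ((m+m')/m)^((p+1)/2) * Emin d p h m < (m+m')/m * Emin d p h m := by
    have hlt : (m+m')/m < ((m+m')/m)^((p+1)/2) := by
      calc (m+m')/m = ((m+m')/m)^(1:ℝ) := (Real.rpow_one _).symm
        _ < _ := Real.rpow_lt_rpow_of_exponent_lt hθgt hq1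
    exact mul_lt_mul_of_neg_right hlt negm
  have t2 : ((m+m')/m')^((p+1)/2) * Emin d p h m' < (m+m')/m' * Emin d p h m' := by
    have hlt : (m+m')/m' < ((m+m')/m')^((p+1)/2) := by
      calc (m+m')/m' = ((m+m')/m')^(1:ℝ) := (Real.rpow_one _).symm
        _ < _ := Real.rpow_lt_rpow_of_exponent_lt hθ'gt hq1
    exact mul_lt_mul_of_neg_right hlt negm'
  have u1 : Emin d p h (m+m') < (m+m')/m * Emin d p h m := lt_of_le_of_lt s1 t1
  have u2 : Emin d p h (m+m') < (m+m')/m' * Emin d p h m' := lt_of_le_of_lt s2 t2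
  have w1 : m/(m+m') * Emin d p h (m+m') < Emin d p h m := by
    have h0 := mul_lt_mul_of_pos_left u1 (show (0:ℝ) < m/(m+m') by positivity)
    have hc : m/(m+m') * ((m+m')/m) = 1 := by field_simp
    rwa [← mul_assoc, hc, one_mul] at h0
  have w2 : m'/(m+m') * Emin d p h (m+m') < Emin d p h m' := by
    have h0 := mul_lt_mul_of_pos_left u2 (show (0:ℝ) < m'/(m+m') by positivity)
    have hc : m'/(m+m') * ((m+m')/m') = 1 := by field_simp
    rwa [← mul_assoc, hc, one_mul] at h0
  have hsumcoef : m/(m+m') + m'/(m+m') = 1 := by field_simp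
  have hfin := add_lt_add w1 w2
  rwa [← add_mul, hsumcoef, one_mul] at hfin
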